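/- Let P = {V_1,…,V_{2M}} be a collection of nonempty pairwise disjoint subsets of {1,…,N} with union V, all of the same cardinality, let c ∈ ℝ^N have strictly positive entries, and suppose the blocks are indexed so that ∑_{j∈V_1} c^j ≤ ∑_{j∈V_2} c^j ≤ ⋯ ≤ ∑_{j∈V_{2M}} c^j. Then the pairing P' = {V_1∪V_{2M}, V_2∪V_{2M−1}, …, V_M∪V_{M+1}} satisfies ρ(P',c) ≥ ρ(P'',c) for every pairing P'' of P; that is, P' maximizes ρ(·,c) over all pairings of P. -/
import Mathlib


open Finset

/-- The partition effective sample size `N^eff(Q, c)` for a collection `Q` of blocks. -/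
noncomputable def NeffQ {N : ℕ} (Q : Finset (Finset (Fin N))) (c : Fin N → ℝ) : ℝ :=
  (∑ S ∈ Q, ∑ j ∈ S, c j) ^ 2 / (∑ S ∈ Q, ((S.card : ℝ))⁻¹ * (∑ j ∈ S, c j) ^ 2)

/-- `ρ(Q, c) = N^eff(Q, c) / |V|`, where `V` is the union of the blocks of `Q`. -/
noncomputable def rhoQ {N : ℕ} (Q : Finset (Finset (Fin N))) (c : Fin N → ℝ) : ℝ :=
  NeffQ Q c / (((Q.biUnion id).card : ℝ))

/-- For a fixed-point-free involution `τ`, the map `k ↦ Vs k ∪ Vs (τ k)` is exactly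
two-to-one, so a sum over its image is half the sum over the index set. -/
lemma aux_sum_image {N M : ℕ} {Vs : Fin (2 * M) → Finset (Fin N)}
    (hne : ∀ k, (Vs k).Nonempty)
    (hdisj : ∀ k l, k ≠ l → Disjoint (Vs k) (Vs l))
    (τ : Equiv.Perm (Fin (2 * M))) (hinv : ∀ k, τ (τ k) = k) (hnfp : ∀ k, τ k ≠ k)
    (g : Finset (Fin N) → ℝ) :
    ∑ S ∈ Finset.image (fun k => Vs k ∪ Vs (τ k)) Finset.univ, g S
      = (∑ k, g (Vs k ∪ Vs (τ k))) / 2 := by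
  classical
  set W : Fin (2 * M) → Finset (Fin N) := fun k => Vs k ∪ Vs (τ k) with hW
  -- fibers of W are exactly the pairs {k₀, τ k₀}
  have hkey : ∀ k k₀ : Fin (2 * M), W k = W k₀ → k = k₀ ∨ k = τ k₀ := by
    intro k k₀ h
    obtain ⟨x, hx⟩ := hne k
    have hx' : x ∈ Vs k₀ ∪ Vs (τ k₀) := by
      have : x ∈ W k := Finset.mem_union_left _ hx
      rw [h] at this; exact this
    rcases Finset.mem_union.1 hx' with h1 | h1
    · left
      by_contra hkk
      have := (hdisj k k₀ hkk).le_bot (Finset.mem_inter.2 ⟨hx, h1⟩)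
      simp at this
    · right
      by_contra hkk
      have := (hdisj k (τ k₀) hkk).le_bot (Finset.mem_inter.2 ⟨hx, h1⟩)
      simp at this
  have hWτ : ∀ k₀, W (τ k₀) = W k₀ := by
    intro k₀
    simp only [hW, hinv]
    exact Finset.union_comm _ _
  have hfiber : ∀ k₀ : Fin (2 * M),
      (Finset.univ.filter fun k => W k = W k₀) = {k₀, τ k₀} := by
    intro k₀
    ext k
    simp only [Finset.mem_filter, Finset.mem_univ, true_and, Finset.mem_insert,
      Finset.mem_singleton]
    constructor
    · exact hkey k k₀
    · rintro (rfl | rfl)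
      · rfl
      · exact hWτ k₀
  have hcard : ∀ k₀ : Fin (2 * M),
      (Finset.univ.filter fun k => W k = W k₀).card = 2 := by
    intro k₀
    rw [hfiber k₀, Finset.card_insert_of_notMem (by simpa using (hnfp k₀).symm),
      Finset.card_singleton]
  have h := Finset.sum_fiberwise_eq_sum_filter' Finset.univ
    (Finset.image W Finset.univ) W g
  have hrhs : ∑ i ∈ Finset.univ with W i ∈ Finset.image W Finset.univ, g (W i)
      = ∑ k, g (W k) := by
    apply Finset.sum_congr _ (fun _ _ => rfl)
    apply Finset.filter_true_of_mem
    intro i _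
    exact Finset.mem_image_of_mem _ (Finset.mem_univ i)
  have hlhs : ∑ j ∈ Finset.image W Finset.univ, ∑ i ∈ Finset.univ with W i = j, g j
      = ∑ j ∈ Finset.image W Finset.univ, 2 * g j := by
    apply Finset.sum_congr rfl
    intro j hj
    obtain ⟨k₀, _, rfl⟩ := Finset.mem_image.1 hj
    rw [Finset.sum_const, hcard k₀]
    push_cast
    ring
  rw [hrhs, hlhs, ← Finset.mul_sum] at h
  show ∑ S ∈ Finset.image W Finset.univ, g S = (∑ k, g (W k)) / 2
  linarith [h]

lemma aux_biUnion {N M : ℕ} (Vs : Fin (2 * M) → Finset (Fin N))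
    (τ : Equiv.Perm (Fin (2 * M))) :
    (Finset.image (fun k => Vs k ∪ Vs (τ k)) Finset.univ).biUnion id
      = Finset.univ.biUnion Vs := by
  classical
  apply Finset.Subset.antisymm
  · intro x hx
    obtain ⟨S, hS, hxS⟩ := Finset.mem_biUnion.1 hx
    obtain ⟨k, -, rfl⟩ := Finset.mem_image.1 hS
    rcases Finset.mem_union.1 hxS with h | h
    · exact Finset.mem_biUnion.2 ⟨k, Finset.mem_univ _, h⟩
    · exact Finset.mem_biUnion.2 ⟨τ k, Finset.mem_univ _, h⟩
  · intro x hx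
    obtain ⟨k, -, hxk⟩ := Finset.mem_biUnion.1 hx
    exact Finset.mem_biUnion.2 ⟨Vs k ∪ Vs (τ k),
      Finset.mem_image_of_mem _ (Finset.mem_univ k), Finset.mem_union_left _ hxk⟩

theorem stmt_12 {N M : ℕ} (hN : 1 ≤ N) (hM : 1 ≤ M)
    (Vs : Fin (2 * M) → Finset (Fin N))
    (hne : ∀ k, (Vs k).Nonempty)
    (hdisj : ∀ k l, k ≠ l → Disjoint (Vs k) (Vs l))
    (hcard : ∀ k l, (Vs k).card = (Vs l).card)
    (c : Fin N → ℝ) (hc : ∀ j, 0 < c j)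
    (hsorted : ∀ k l : Fin (2 * M), k ≤ l → ∑ j ∈ Vs k, c j ≤ ∑ j ∈ Vs l, c j)
    (σ : Equiv.Perm (Fin (2 * M))) (hinv : ∀ k, σ (σ k) = k) (hnfp : ∀ k, σ k ≠ k) :
    rhoQ (Finset.image (fun k => Vs k ∪ Vs (σ k)) Finset.univ) c ≤
      rhoQ (Finset.image (fun k => Vs k ∪ Vs (Fin.rev k)) Finset.univ) c := by
  classical
  have hMpos : 0 < 2 * M := by omega
  -- rev as a permutation, a fixed-point-free involution
  have hrevinv : ∀ k : Fin (2 * M), (Fin.revPerm : Equiv.Perm (Fin (2 * M))) ((Fin.revPerm) k) = k :=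
    fun k => Fin.rev_rev k
  have hrevnfp : ∀ k : Fin (2 * M), (Fin.revPerm : Equiv.Perm (Fin (2 * M))) k ≠ k := by
    intro k h
    have hv : (Fin.rev k).val = k.val := congrArg Fin.val h
    have hk : k.val < 2 * M := k.isLt
    rw [Fin.val_rev] at hv
    omega
  set s : Fin (2 * M) → ℝ := fun k => ∑ j ∈ Vs k, c j with hs
  have hspos : ∀ k, 0 < s k := fun k =>
    Finset.sum_pos (fun j _ => hc j) (hne k)
  -- common block cardinality
  set m : ℕ := (Vs ⟨0, hMpos⟩).card with hm
  have hmpos : 0 < m := Finset.card_pos.2 (hne _)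
  have hsum_union : ∀ (τ : Equiv.Perm (Fin (2 * M))), (∀ k, τ k ≠ k) →
      ∀ k, ∑ j ∈ Vs k ∪ Vs (τ k), c j = s k + s (τ k) := by
    intro τ hτ k
    rw [Finset.sum_union (hdisj k (τ k) (Ne.symm (hτ k)))]
  have hcard_union : ∀ (τ : Equiv.Perm (Fin (2 * M))), (∀ k, τ k ≠ k) →
      ∀ k, (Vs k ∪ Vs (τ k)).card = 2 * m := by
    intro τ hτ k
    rw [Finset.card_union_of_disjoint (hdisj k (τ k) (Ne.symm (hτ k))),
      hcard k ⟨0, hMpos⟩, hcard (τ k) ⟨0, hMpos⟩]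
    ring
  -- numerator sums are equal
  have hnum : ∀ (τ : Equiv.Perm (Fin (2 * M))), (∀ k, τ (τ k) = k) → (∀ k, τ k ≠ k) →
      ∑ S ∈ Finset.image (fun k => Vs k ∪ Vs (τ k)) Finset.univ, ∑ j ∈ S, c j
        = ∑ k, s k := by
    intro τ hτi hτ
    rw [aux_sum_image hne hdisj τ hτi hτ (fun S => ∑ j ∈ S, c j)]
    have : ∑ k, ∑ j ∈ Vs k ∪ Vs (τ k), c j = ∑ k, (s k + s (τ k)) :=
      Finset.sum_congr rfl fun k _ => hsum_union τ hτ k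
    rw [this, Finset.sum_add_distrib, Equiv.sum_comp τ s]
    ring
  -- denominator sums
  have hden : ∀ (τ : Equiv.Perm (Fin (2 * M))), (∀ k, τ (τ k) = k) → (∀ k, τ k ≠ k) →
      ∑ S ∈ Finset.image (fun k => Vs k ∪ Vs (τ k)) Finset.univ,
          ((S.card : ℝ))⁻¹ * (∑ j ∈ S, c j) ^ 2
        = ((2 * m : ℝ))⁻¹ * ((∑ k, (s k) ^ 2) + ∑ k, s k * s (τ k)) := by
    intro τ hτi hτ
    rw [aux_sum_image hne hdisj τ hτi hτ
      (fun S => ((S.card : ℝ))⁻¹ * (∑ j ∈ S, c j) ^ 2)]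
    have h1 : ∑ k, ((((Vs k ∪ Vs (τ k)).card : ℝ))⁻¹ * (∑ j ∈ Vs k ∪ Vs (τ k), c j) ^ 2)
        = ∑ k, ((2 * m : ℝ))⁻¹ * (s k + s (τ k)) ^ 2 := by
      apply Finset.sum_congr rfl
      intro k _
      rw [hsum_union τ hτ k, hcard_union τ hτ k]
      push_cast
      ring
    rw [h1]
    have h2 : ∑ k, ((2 * m : ℝ))⁻¹ * (s k + s (τ k)) ^ 2
        = ((2 * m : ℝ))⁻¹ * ∑ k, (s k + s (τ k)) ^ 2 := by
      rw [← Finset.mul_sum]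
    rw [h2]
    have h3 : ∑ k, (s k + s (τ k)) ^ 2
        = (∑ k, (s k) ^ 2) + (∑ k, (s (τ k)) ^ 2) + 2 * ∑ k, s k * s (τ k) := by
      have he : ∀ k, (s k + s (τ k)) ^ 2
          = (s k) ^ 2 + (s (τ k)) ^ 2 + 2 * (s k * s (τ k)) := fun k => by ring
      simp_rw [he]
      rw [Finset.sum_add_distrib, Finset.sum_add_distrib, ← Finset.mul_sum]
    rw [h3, Equiv.sum_comp τ (fun k => (s k) ^ 2)]
    ring
  -- rearrangement inequality
  have hanti : Antivary s (fun k => s (Fin.rev k)) := by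
    intro i j hij
    simp only at hij
    have h1 : Fin.rev i < Fin.rev j := by
      by_contra h
      push_neg at h
      exact absurd (hsorted _ _ h) (not_le.2 hij)
    exact hsorted j i (Fin.rev_lt_rev.1 h1).le
  have hrearr : ∑ k, s k * s (Fin.rev k) ≤ ∑ k, s k * s (σ k) := by
    have := hanti.sum_mul_le_sum_mul_comp_perm (σ := σ.trans Fin.revPerm)
    simpa [Fin.rev_rev] using this
  -- positivity facts
  have hS : 0 < ∑ k, s k := Finset.sum_pos (fun k _ => hspos k) ⟨⟨0, hMpos⟩, Finset.mem_univ _⟩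
  have hsq : 0 < ∑ k, (s k) ^ 2 :=
    Finset.sum_pos (fun k _ => pow_pos (hspos k) 2) ⟨⟨0, hMpos⟩, Finset.mem_univ _⟩
  have hcross : ∀ (τ : Equiv.Perm (Fin (2 * M))), 0 < ∑ k, s k * s (τ k) :=
    fun τ => Finset.sum_pos (fun k _ => mul_pos (hspos k) (hspos (τ k)))
      ⟨⟨0, hMpos⟩, Finset.mem_univ _⟩
  have h2m : (0 : ℝ) < ((2 * m : ℝ))⁻¹ := by positivity
  -- the union is the same for both pairings
  have hbi : ((Finset.image (fun k => Vs k ∪ Vs (σ k)) Finset.univ).biUnion id).card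
      = ((Finset.image (fun k => Vs k ∪ Vs (Fin.rev k)) Finset.univ).biUnion id).card := by
    rw [aux_biUnion Vs σ]
    have : (Finset.image (fun k => Vs k ∪ Vs (Fin.rev k)) Finset.univ)
        = (Finset.image (fun k => Vs k ∪ Vs (Fin.revPerm k)) Finset.univ) := rfl
    rw [this, aux_biUnion Vs Fin.revPerm]
  have hbipos : (0 : ℝ) < ((Finset.image (fun k => Vs k ∪ Vs (Fin.rev k)) Finset.univ).biUnion id).card := by
    have : (Finset.image (fun k => Vs k ∪ Vs (Fin.rev k)) Finset.univ)
        = (Finset.image (fun k => Vs k ∪ Vs (Fin.revPerm k)) Finset.univ) := rfl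
    rw [this, aux_biUnion Vs Fin.revPerm]
    have hx : (⟨0, hMpos⟩ : Fin (2 * M)) ∈ Finset.univ := Finset.mem_univ _
    obtain ⟨x, hxm⟩ := hne ⟨0, hMpos⟩
    have : x ∈ Finset.univ.biUnion Vs := Finset.mem_biUnion.2 ⟨_, hx, hxm⟩
    have hc' : 0 < (Finset.univ.biUnion Vs).card := Finset.card_pos.2 ⟨x, this⟩
    exact_mod_cast hc'
  -- put everything together
  unfold rhoQ NeffQ
  rw [hnum σ hinv hnfp, hden σ hinv hnfp]
  have hnumrev : ∑ S ∈ Finset.image (fun k => Vs k ∪ Vs (Fin.rev k)) Finset.univ, ∑ j ∈ S, c j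
      = ∑ k, s k := hnum Fin.revPerm hrevinv hrevnfp
  have hdenrev : ∑ S ∈ Finset.image (fun k => Vs k ∪ Vs (Fin.rev k)) Finset.univ,
        ((S.card : ℝ))⁻¹ * (∑ j ∈ S, c j) ^ 2
      = ((2 * m : ℝ))⁻¹ * ((∑ k, (s k) ^ 2) + ∑ k, s k * s (Fin.rev k)) :=
    hden Fin.revPerm hrevinv hrevnfp
  rw [hnumrev, hdenrev, ← hbi]
  have hdpos1 : (0 : ℝ) < ((2 * m : ℝ))⁻¹ * ((∑ k, (s k) ^ 2) + ∑ k, s k * s (Fin.rev k)) := by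
    apply mul_pos h2m
    have := hcross Fin.revPerm
    simp only [Fin.revPerm_apply] at this
    linarith
  have hdle : ((2 * m : ℝ))⁻¹ * ((∑ k, (s k) ^ 2) + ∑ k, s k * s (Fin.rev k))
      ≤ ((2 * m : ℝ))⁻¹ * ((∑ k, (s k) ^ 2) + ∑ k, s k * s (σ k)) := by
    apply mul_le_mul_of_nonneg_left _ (le_of_lt h2m)
    linarith [hrearr]
  have hCpos : (0 : ℝ) < ((Finset.image (fun k => Vs k ∪ Vs (σ k)) Finset.univ).biUnion id).card := by
    rw [hbi]; exact hbipos
  have hfrac : (∑ k, s k) ^ 2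
        / (((2 * m : ℝ))⁻¹ * ((∑ k, (s k) ^ 2) + ∑ k, s k * s (σ k)))
      ≤ (∑ k, s k) ^ 2
        / (((2 * m : ℝ))⁻¹ * ((∑ k, (s k) ^ 2) + ∑ k, s k * s (Fin.rev k))) :=
    div_le_div_of_nonneg_left (by positivity) hdpos1 hdle
  exact div_le_div_of_nonneg_right hfrac hCpos.le
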